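/- Let n ≥ 1 and let K be a symmetric n×n integer matrix with every off-diagonal entry equal to 0 or −1 and with every row sum ∑_j K_{ij} ≥ 0 (i.e., K is the Kirchhoff matrix of a quiver without multiple connections). Then for every 1 ≤ k ≤ n, the k-th smallest eigenvalue satisfies λ_k ≥ d_k − (n − k), where d_1 ≤ … ≤ d_n are the diagonal entries of K listed in increasing order. -/

import Mathlib

open Matrix Finset

local notation "⟪" x ", " y "⟫" => inner (𝕜 := ℝ) x y

section aux
variable {n : ℕ} {E : Type*} [NormedAddCommGroup E] [InnerProductSpace ℝ E]

lemma inner_eq_zero_of_mem_span (b : OrthonormalBasis (Fin n) ℝ E) (s : Set (Fin n))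
    {j : Fin n} (hj : j ∉ s) {x : E} (hx : x ∈ Submodule.span ℝ (b '' s)) :
    ⟪b j, x⟫ = 0 := by
  have h : Submodule.span ℝ (b '' s) ≤ LinearMap.ker (innerₛₗ ℝ (b j)) := by
    rw [Submodule.span_le]
    rintro _ ⟨i, hi, rfl⟩
    simp only [SetLike.mem_coe, LinearMap.mem_ker, innerₛₗ_apply_apply]
    exact b.orthonormal.2 (fun h' => hj (h' ▸ hi))
  exact h hx

lemma finrank_span_orthonormal (b : OrthonormalBasis (Fin n) ℝ E) (s : Finset (Fin n)) :
    Module.finrank ℝ (Submodule.span ℝ (b '' ↑s)) = s.card := by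
  classical
  rw [Set.image_eq_range]
  rw [show (fun x : ↥(↑s : Set (Fin n)) => b ↑x) = b ∘ ((↑) : ↥(↑s : Set (Fin n)) → Fin n) from rfl]
  rw [finrank_span_eq_card (b.orthonormal.linearIndependent.comp _ Subtype.coe_injective)]
  simp

end aux

/-- **Theorem 2 (lower bound for quivers without multiple connections).**
If `K` is the Kirchhoff matrix of a quiver without multiple connections
(symmetric integer matrix with off-diagonal entries in `{0, -1}` and
nonnegative row sums) on `n ≥ 1` vertices, then the `k`-th smallest eigenvalue
satisfies `λ_k ≥ d_k - (n - k)`, where `d_1 ≤ ⋯ ≤ d_n` are the sorted diagonal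
entries. -/
theorem quiver_eigenvalue_lower_bound
    (n : ℕ) (hn : 1 ≤ n) (K : Matrix (Fin n) (Fin n) ℤ)
    (hsym : K.IsSymm)
    (hoff : ∀ i j : Fin n, i ≠ j → K i j = 0 ∨ K i j = -1)
    (hrow : ∀ i : Fin n, 0 ≤ ∑ j, K i j)
    (hK : (K.map (Int.cast : ℤ → ℝ)).IsHermitian)
    (lam : Fin n → ℝ)
    (hlam : lam = hK.eigenvalues ∘ Tuple.sort hK.eigenvalues)
    (d : Fin n → ℤ)
    (hd : d = (fun i => K i i) ∘ Tuple.sort (fun i => K i i)) :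
    ∀ (k : ℕ) (hk1 : 1 ≤ k) (hkn : k ≤ n),
      (d ⟨k - 1, by omega⟩ : ℝ) - ((n - k : ℕ) : ℝ) ≤ lam ⟨k - 1, by omega⟩ := by
  intro k hk1 hkn
  classical
  set A : Matrix (Fin n) (Fin n) ℝ := K.map (Int.cast : ℤ → ℝ) with hA
  set b := hK.eigenvectorBasis with hb
  set μ := hK.eigenvalues with hμ
  set σ := Tuple.sort hK.eigenvalues with hσ
  set τ := Tuple.sort (fun i => K i i) with hτ
  set k' : Fin n := ⟨k - 1, by omega⟩ with hk'
  have hdmono : Monotone d := hd ▸ Tuple.monotone_sort (fun i => K i i)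
  have hlammono : Monotone lam := hlam ▸ Tuple.monotone_sort hK.eigenvalues
  set e := EuclideanSpace.basisFun (Fin n) ℝ with he
  set sW : Finset (Fin n) := Finset.image σ (Finset.Iic k') with hsW
  set sU : Finset (Fin n) := Finset.image τ (Finset.Ici k') with hsU
  set W := Submodule.span ℝ (⇑b '' ↑sW) with hW
  set U := Submodule.span ℝ (⇑e '' ↑sU) with hU
  have hcardW : sW.card = k := by
    rw [hsW, Finset.card_image_of_injective _ σ.injective, Fin.card_Iic]
    show k - 1 + 1 = k; omega
  have hcardU : sU.card = n - k + 1 := by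
    rw [hsU, Finset.card_image_of_injective _ τ.injective, Fin.card_Ici]
    show n - (k - 1) = n - k + 1; omega
  have hfinW : Module.finrank ℝ W = k := by rw [hW, finrank_span_orthonormal, hcardW]
  have hfinU : Module.finrank ℝ U = n - k + 1 := by
    rw [hU, finrank_span_orthonormal, hcardU]
  have hfininf : 1 ≤ Module.finrank ℝ ↥(U ⊓ W) := by
    have h1 := Submodule.finrank_sup_add_finrank_inf_eq U W
    rw [hfinU, hfinW] at h1
    have h2 : Module.finrank ℝ ↥(U ⊔ W) ≤ n := by
      simpa [finrank_euclideanSpace] using Submodule.finrank_le (U ⊔ W)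
    omega
  clear_value σ τ sW sU
  have : Nontrivial ↥(U ⊓ W) := Module.finrank_pos_iff (R := ℝ) |>.mp (by omega)
  obtain ⟨y, hy⟩ := exists_ne (0 : ↥(U ⊓ W))
  set x : EuclideanSpace ℝ (Fin n) := (y : EuclideanSpace ℝ (Fin n)) with hx
  have hx0 : x ≠ 0 := fun h => hy (Subtype.ext h)
  have hxU : x ∈ U := y.2.1
  have hxW : x ∈ W := y.2.2
  set S : ℝ := ⟪x, x⟫ with hS
  have hSpos : 0 < S := by
    rw [hS, real_inner_self_eq_norm_sq]
    exact pow_pos (norm_pos_iff.mpr hx0) 2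
  set T := Matrix.toEuclideanLin A with hT
  set q : ℝ := ⟪x, T x⟫ with hq
  -- coordinates vanish outside sU
  have hsupp : ∀ i, i ∉ sU → x i = 0 := by
    intro i hi
    have := inner_eq_zero_of_mem_span e ↑sU (by simpa using hi) hxU
    rw [he, EuclideanSpace.basisFun_apply, EuclideanSpace.inner_single_left] at this
    simpa using this
  -- diagonal entries on sU are ≥ d k'
  have hdiag : ∀ i ∈ sU, (d k' : ℝ) ≤ (K i i : ℝ) := by
    intro i hi
    rw [hsU, Finset.mem_image] at hi
    obtain ⟨m, hm, rfl⟩ := hi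
    have : d k' ≤ d m := hdmono (Finset.mem_Ici.mp hm)
    have hdm : d m = K (τ m) (τ m) := by rw [hd]; rfl
    exact_mod_cast hdm ▸ this
  have hqsum : q = ∑ i, ∑ j, (K i j : ℝ) * (x i * x j) := by
    rw [hq]
    have h1 : ∀ i : Fin n, (T x) i = ∑ j, (K i j : ℝ) * x j := fun i => by
      show (A *ᵥ (x : Fin n → ℝ)) i = _
      simp [Matrix.mulVec, dotProduct, hA, Matrix.map_apply]
    calc ⟪x, T x⟫ = ∑ i, x i * (T x) i := by
          simp [PiLp.inner_apply, RCLike.inner_apply, conj_trivial]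
          exact Finset.sum_congr rfl fun i _ => mul_comm _ _
      _ = ∑ i, ∑ j, (K i j : ℝ) * (x i * x j) := by
          refine Finset.sum_congr rfl fun i _ => ?_
          rw [h1, Finset.mul_sum]
          exact Finset.sum_congr rfl fun j _ => by ring
  have hSsum : S = ∑ i, x i * x i := by
    rw [hS]; simp only [PiLp.inner_apply, RCLike.inner_apply, conj_trivial]
  -- lower bound for q
  have hlower : ((d k' : ℝ) - ((n - k : ℕ) : ℝ)) * S ≤ q := by
    have h2 : (d k' : ℝ) * S ≤ ∑ i, (K i i : ℝ) * (x i * x i) := by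
      rw [hSsum, Finset.mul_sum]
      refine Finset.sum_le_sum fun i _ => ?_
      by_cases hxi : x i = 0
      · simp [hxi]
      · have hiU : i ∈ sU := by by_contra h; exact hxi (hsupp i h)
        exact mul_le_mul_of_nonneg_right (hdiag i hiU) (mul_self_nonneg _)
    have h3 : ∀ i : Fin n, ∀ j ∈ Finset.univ.erase i,
        -(|x i| * |x j|) ≤ (K i j : ℝ) * (x i * x j) := by
      intro i j hj
      have hij : i ≠ j := (Finset.ne_of_mem_erase hj).symm
      rcases hoff i j hij with h | h
      · have h0 : ((K i j : ℝ)) = 0 := by rw [h]; simp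
        rw [h0, zero_mul]
        exact neg_nonpos.mpr (mul_nonneg (abs_nonneg _) (abs_nonneg _))
      · have h0 : ((K i j : ℝ)) = -1 := by rw [h]; simp
        rw [h0, neg_one_mul]
        have h5 := le_abs_self (x i * x j)
        rw [abs_mul] at h5
        linarith
    have h5 : ∑ i, ∑ j ∈ Finset.univ.erase i, (|x i| * |x j|)
        = (∑ i, |x i|) ^ 2 - S := by
      have hsq : (∑ i, |x i|) ^ 2 = ∑ i, ∑ j, |x i| * |x j| := by
        rw [sq, Finset.sum_mul_sum]
      rw [hsq, hSsum, ← Finset.sum_sub_distrib]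
      refine Finset.sum_congr rfl fun i _ => ?_
      rw [← Finset.add_sum_erase _ (fun j => |x i| * |x j|) (Finset.mem_univ i),
        abs_mul_abs_self]
      ring
    have h4 : (∑ i, |x i|) ^ 2 ≤ ((n - k + 1 : ℕ) : ℝ) * S := by
      have habs : ∑ i, |x i| = ∑ i ∈ sU, |x i| :=
        (Finset.sum_subset (Finset.subset_univ sU)
          (fun i _ hi => by rw [hsupp i hi, abs_zero])).symm
      have hle : ∑ i ∈ sU, |x i| ^ 2 ≤ S := by
        rw [hSsum]
        calc ∑ i ∈ sU, |x i| ^ 2 = ∑ i ∈ sU, x i * x i :=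
              Finset.sum_congr rfl fun i _ => by rw [sq_abs, sq]
          _ ≤ ∑ i, x i * x i :=
              Finset.sum_le_sum_of_subset_of_nonneg (Finset.subset_univ sU)
                (fun i _ _ => mul_self_nonneg _)
      rw [habs]
      calc (∑ i ∈ sU, |x i|) ^ 2 ≤ (sU.card : ℝ) * ∑ i ∈ sU, |x i| ^ 2 :=
            sq_sum_le_card_mul_sum_sq
        _ ≤ (sU.card : ℝ) * S := mul_le_mul_of_nonneg_left hle (by positivity)
        _ = ((n - k + 1 : ℕ) : ℝ) * S := by rw [hcardU]
    have hsplit : q = (∑ i, (K i i : ℝ) * (x i * x i))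
        + ∑ i, ∑ j ∈ Finset.univ.erase i, (K i j : ℝ) * (x i * x j) := by
      rw [hqsum, ← Finset.sum_add_distrib]
      refine Finset.sum_congr rfl fun i _ => ?_
      rw [← Finset.add_sum_erase _ (fun j => (K i j : ℝ) * (x i * x j)) (Finset.mem_univ i)]
    have h6 : -((∑ i, |x i|) ^ 2 - S)
        ≤ ∑ i, ∑ j ∈ Finset.univ.erase i, (K i j : ℝ) * (x i * x j) := by
      rw [← h5, ← Finset.sum_neg_distrib]
      refine Finset.sum_le_sum fun i _ => ?_
      rw [← Finset.sum_neg_distrib]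
      exact Finset.sum_le_sum (h3 i)
    have hcast : ((n - k + 1 : ℕ) : ℝ) = ((n - k : ℕ) : ℝ) + 1 := by push_cast; ring
    rw [hcast] at h4
    linarith
  -- upper bound for q
  have hupper : q ≤ lam k' * S := by
    have hTb : ∀ j, T (b j) = μ j • b j := fun j => WithLp.ofLp_injective 2 (hK.mulVec_eigenvectorBasis j)
    have hcW : ∀ j, j ∉ sW → ⟪b j, x⟫ = 0 := fun j hj =>
      inner_eq_zero_of_mem_span b ↑sW (by simpa using hj) hxW
    have hμle : ∀ j ∈ sW, μ j ≤ lam k' := by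
      intro j hj
      rw [hsW, Finset.mem_image] at hj
      obtain ⟨i, hi, rfl⟩ := hj
      have h1 : lam i ≤ lam k' := hlammono (Finset.mem_Iic.mp hi)
      have h2 : lam i = μ (σ i) := by rw [hlam]; rfl
      linarith
    have hsym' := Matrix.isHermitian_iff_isSymmetric.mp hK
    have hqform : q = ∑ j, μ j * (⟪b j, x⟫ * ⟪b j, x⟫) := by
      rw [hq, ← b.sum_inner_mul_inner x (T x)]
      refine Finset.sum_congr rfl fun j _ => ?_
      have h1 : ⟪b j, T x⟫ = μ j * ⟪b j, x⟫ := by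
        rw [← hsym' (b j) x, hTb j, real_inner_smul_left]
      rw [h1, real_inner_comm x (b j)]
      ring
    have hSform : S = ∑ j, ⟪b j, x⟫ * ⟪b j, x⟫ := by
      rw [hS, ← b.sum_inner_mul_inner x x]
      exact Finset.sum_congr rfl fun j _ => by rw [real_inner_comm x (b j)]
    rw [hqform, hSform, Finset.mul_sum]
    refine Finset.sum_le_sum fun j _ => ?_
    by_cases hj : j ∈ sW
    · exact mul_le_mul_of_nonneg_right (hμle j hj) (mul_self_nonneg _)
    · rw [hcW j hj]
      simp
  have := hlower.trans hupper
  exact le_of_mul_le_mul_right this hSpos
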